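/- arXiv:2309.02982 — 4 statements merged into one kernel-verified Lean document; each statement's English description precedes it below -/
import Mathlib

section
/- With f₁ and f₂ as in the context (for any choice of the scalars α₁, α'_1, …, α'_n, β_1, …, β_m), the quotient ring ℂ[a,b,x,y]/(f₁, f₂) is nonzero; equivalently, the ideal generated by f₁ and f₂ is a proper ideal of ℂ[a,b,x,y]. -/
open MvPolynomial

/-- In `ℂ[a,b,x,y]` (variables `X 0 = a`, `X 1 = b`, `X 2 = x`, `X 3 = y`), with
`f₁ = ab - xy + α₁` and `f₂ = 1 - a·(ab - α'₁)⋯(ab - α'ₙ) + x·(xy - β₁)⋯(xy - βₘ)`,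
the quotient ring `ℂ[a,b,x,y]/(f₁, f₂)` is nonzero. -/
theorem stmt_4 (n m : ℕ) (α₁ : ℂ) (α' : Fin n → ℂ) (β : Fin m → ℂ)
    (f₁ f₂ : MvPolynomial (Fin 4) ℂ)
    (hf₁ : f₁ = X 0 * X 1 - X 2 * X 3 + C α₁)
    (hf₂ : f₂ = 1 - X 0 * ∏ i, (X 0 * X 1 - C (α' i))
        + X 2 * ∏ j, (X 2 * X 3 - C (β j))) :
    Nontrivial (MvPolynomial (Fin 4) ℂ ⧸ Ideal.span {f₁, f₂}) := by
  -- Find `t` with `∏ (t - α' i) ≠ 0` and `1 + ∏ (t + α₁ - β j) ≠ 0`.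
  obtain ⟨t, ht1, ht2⟩ :
      ∃ t : ℂ, (∏ i, (t - α' i)) ≠ 0 ∧ (1 + ∏ j, (t + α₁ - β j)) ≠ 0 := by
    by_contra hcon
    push_neg at hcon
    have h1 : (∏ i, (Polynomial.X - Polynomial.C (α' i)) : Polynomial ℂ) ≠ 0 :=
      Finset.prod_ne_zero_iff.mpr fun i _ => Polynomial.X_sub_C_ne_zero _
    have h2 : ((1 : Polynomial ℂ) + ∏ j, (Polynomial.X + Polynomial.C (α₁ - β j))) ≠ 0 := by
      cases m with
      | zero =>
        intro h
        have := congrArg (Polynomial.eval 0) h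
        norm_num at this
      | succ m =>
        intro h
        have hz : (∏ j, (Polynomial.X + Polynomial.C (α₁ - β j)) : Polynomial ℂ).eval
            (β 0 - α₁) = 0 := by
          rw [Polynomial.eval_prod]
          exact Finset.prod_eq_zero (Finset.mem_univ 0) (by simp)
        have h2 : Polynomial.eval (β 0 - α₁)
            ((1 : Polynomial ℂ) + ∏ j, (Polynomial.X + Polynomial.C (α₁ - β j))) = 0 := by
          rw [h]; simp
        rw [Polynomial.eval_add, Polynomial.eval_one, hz] at h2
        norm_num at h2
    have hne := mul_ne_zero h1 h2
    apply hne
    apply Polynomial.zero_of_eval_zero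
    intro x
    by_cases hx : (∏ i, (x - α' i)) = 0
    · rw [Polynomial.eval_mul, Polynomial.eval_prod]
      simp only [Polynomial.eval_sub, Polynomial.eval_X, Polynomial.eval_C]
      rw [hx, zero_mul]
    · have h := hcon x hx
      have hzero : (1 : ℂ) + ∏ j, (x + (α₁ - β j)) = 0 := by
        rw [← h]; congr 1; exact Finset.prod_congr rfl fun j _ => by ring
      simp only [Polynomial.eval_mul, Polynomial.eval_add, Polynomial.eval_one,
        Polynomial.eval_prod, Polynomial.eval_X, Polynomial.eval_C]
      rw [hzero, mul_zero]
  set s : ℂ := t + α₁ with hs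
  set Pt : ℂ := ∏ i, (t - α' i) with hPt
  set Qs : ℂ := ∏ j, (s - β j) with hQs
  set A : ℂ := (1 + Qs) / Pt with hA
  have hA0 : A ≠ 0 := div_ne_zero ht2 ht1
  set v : Fin 4 → ℂ := ![A, t / A, 1, s] with hv
  have hab : A * (t / A) = t := by rw [mul_comm, div_mul_cancel₀ t hA0]
  have hv1 : eval v f₁ = 0 := by
    rw [hf₁]
    simp only [map_add, map_sub, map_mul, eval_X, eval_C, hv]
    simp only [Matrix.cons_val_zero, Matrix.cons_val_one, Matrix.head_cons,
      Matrix.cons_val_two, Matrix.tail_cons, Matrix.cons_val_three]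
    rw [hab, hs]
    ring
  have hv2 : eval v f₂ = 0 := by
    rw [hf₂]
    simp only [map_add, map_sub, map_mul, map_one, map_prod, eval_X, eval_C, hv]
    simp only [Matrix.cons_val_zero, Matrix.cons_val_one, Matrix.head_cons,
      Matrix.cons_val_two, Matrix.tail_cons, Matrix.cons_val_three]
    rw [hab]
    have hone : (∏ j, ((1:ℂ) * s - β j)) = Qs := by
      rw [hQs]; exact Finset.prod_congr rfl fun j _ => by ring
    rw [hone, ← hPt, hA, div_mul_cancel₀ _ ht1]
    ring
  have hker : Ideal.span {f₁, f₂} ≤ RingHom.ker (eval v) := by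
    rw [Ideal.span_le]
    rintro g hg
    simp only [Set.mem_insert_iff, Set.mem_singleton_iff] at hg
    rcases hg with rfl | rfl
    · exact hv1
    · exact hv2
  have hne : Ideal.span {f₁, f₂} ≠ ⊤ := by
    intro h
    have h1 : (1 : MvPolynomial (Fin 4) ℂ) ∈ Ideal.span {f₁, f₂} := h ▸ Submodule.mem_top
    have := hker h1
    rw [RingHom.mem_ker, map_one] at this
    exact one_ne_zero this
  exact Ideal.Quotient.nontrivial_iff.mpr hne
end

section
/- With f₁ and f₂ as in the context (for any choice of the scalars α₁, α'_1, …, α'_n, β_1, …, β_m), let J be the ideal of ℂ[a,b,x,y] generated by f₁, f₂, and all 2×2 minors of the Jacobian matrix of (f₁, f₂), i.e. all elements (∂f₁/∂v)·(∂f₂/∂w) − (∂f₁/∂w)·(∂f₂/∂v) for v, w ranging over the variables a, b, x, y. Then J is the unit ideal (it contains 1). -/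
open MvPolynomial

private lemma pd_swap (u v : Fin 4) (huv : u ≠ v) (n : ℕ) (α : Fin n → ℂ) :
    X v * pderiv v (∏ i, (X u * X v - C (α i)) : MvPolynomial (Fin 4) ℂ)
      = X u * pderiv u (∏ i, (X u * X v - C (α i))) := by
  induction n with
  | zero => simp
  | succ k ih =>
    rw [Fin.prod_univ_succ]
    simp only [pderiv_mul, map_sub, pderiv_C, pderiv_X_self,
      pderiv_X_of_ne huv, pderiv_X_of_ne huv.symm]
    have h := ih (fun i => α i.succ)
    linear_combination (X u * X v - C (α 0)) * h

private lemma pd_vanish (u v w : Fin 4) (hwu : w ≠ u) (hwv : w ≠ v)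
    (n : ℕ) (α : Fin n → ℂ) :
    pderiv w (∏ i, (X u * X v - C (α i)) : MvPolynomial (Fin 4) ℂ) = 0 := by
  induction n with
  | zero => simp
  | succ k ih =>
    rw [Fin.prod_univ_succ]
    simp [pderiv_mul, pderiv_X_of_ne hwu.symm, pderiv_X_of_ne hwv.symm, ih]

/-- With `f₁ = ab - xy + α₁` and
`f₂ = 1 - a·(ab - α'₁)⋯(ab - α'ₙ) + x·(xy - β₁)⋯(xy - βₘ)` in `ℂ[a,b,x,y]`
(variables `X 0 = a`, `X 1 = b`, `X 2 = x`, `X 3 = y`), the ideal generated by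
`f₁`, `f₂` and all `2×2` minors of the Jacobian matrix of `(f₁, f₂)` is the unit ideal. -/
theorem stmt_7 (n m : ℕ) (α₁ : ℂ) (α' : Fin n → ℂ) (β : Fin m → ℂ)
    (f₁ f₂ : MvPolynomial (Fin 4) ℂ)
    (hf₁ : f₁ = X 0 * X 1 - X 2 * X 3 + C α₁)
    (hf₂ : f₂ = 1 - X 0 * ∏ i, (X 0 * X 1 - C (α' i))
        + X 2 * ∏ j, (X 2 * X 3 - C (β j))) :
    Ideal.span ({f₁, f₂} ∪ Set.range fun vw : Fin 4 × Fin 4 =>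
      pderiv vw.1 f₁ * pderiv vw.2 f₂ - pderiv vw.2 f₁ * pderiv vw.1 f₂) = ⊤ := by
  set P : MvPolynomial (Fin 4) ℂ := ∏ i, (X 0 * X 1 - C (α' i)) with hP
  set Q : MvPolynomial (Fin 4) ℂ := ∏ j, (X 2 * X 3 - C (β j)) with hQ
  -- the two key minors
  have h01 : pderiv 0 f₁ * pderiv 1 f₂ - pderiv 1 f₁ * pderiv 0 f₂ = X 0 * P := by
    have hs := pd_swap 0 1 (by decide) n α'
    have hv1 : pderiv (1 : Fin 4) Q = 0 := pd_vanish 2 3 1 (by decide) (by decide) m β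
    have hv0 : pderiv (0 : Fin 4) Q = 0 := pd_vanish 2 3 0 (by decide) (by decide) m β
    rw [hf₁, hf₂]
    simp only [map_add, map_sub, pderiv_one, pderiv_mul, pderiv_C, pderiv_X_self,
      pderiv_X_of_ne (show (0:Fin 4) ≠ 1 by decide),
      pderiv_X_of_ne (show (1:Fin 4) ≠ 0 by decide),
      pderiv_X_of_ne (show (2:Fin 4) ≠ 0 by decide),
      pderiv_X_of_ne (show (3:Fin 4) ≠ 0 by decide),
      pderiv_X_of_ne (show (2:Fin 4) ≠ 1 by decide),
      pderiv_X_of_ne (show (3:Fin 4) ≠ 1 by decide),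
      pderiv_X_of_ne (show (2:Fin 4) ≠ 3 by decide),
      pderiv_X_of_ne (show (3:Fin 4) ≠ 2 by decide),
      pderiv_X_of_ne (show (0:Fin 4) ≠ 2 by decide),
      pderiv_X_of_ne (show (1:Fin 4) ≠ 2 by decide),
      pderiv_X_of_ne (show (0:Fin 4) ≠ 3 by decide),
      pderiv_X_of_ne (show (1:Fin 4) ≠ 3 by decide),
      ← hP, ← hQ, hv0, hv1]
    rw [← hP] at hs
    linear_combination (-X 0) * hs
  have h23 : pderiv 2 f₁ * pderiv 3 f₂ - pderiv 3 f₁ * pderiv 2 f₂ = X 2 * Q := by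
    have hs := pd_swap 2 3 (by decide) m β
    have hv3 : pderiv (3 : Fin 4) P = 0 := pd_vanish 0 1 3 (by decide) (by decide) n α'
    have hv2 : pderiv (2 : Fin 4) P = 0 := pd_vanish 0 1 2 (by decide) (by decide) n α'
    rw [hf₁, hf₂]
    simp only [map_add, map_sub, pderiv_one, pderiv_mul, pderiv_C, pderiv_X_self,
      pderiv_X_of_ne (show (0:Fin 4) ≠ 1 by decide),
      pderiv_X_of_ne (show (1:Fin 4) ≠ 0 by decide),
      pderiv_X_of_ne (show (2:Fin 4) ≠ 0 by decide),
      pderiv_X_of_ne (show (3:Fin 4) ≠ 0 by decide),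
      pderiv_X_of_ne (show (2:Fin 4) ≠ 1 by decide),
      pderiv_X_of_ne (show (3:Fin 4) ≠ 1 by decide),
      pderiv_X_of_ne (show (2:Fin 4) ≠ 3 by decide),
      pderiv_X_of_ne (show (3:Fin 4) ≠ 2 by decide),
      pderiv_X_of_ne (show (0:Fin 4) ≠ 2 by decide),
      pderiv_X_of_ne (show (1:Fin 4) ≠ 2 by decide),
      pderiv_X_of_ne (show (0:Fin 4) ≠ 3 by decide),
      pderiv_X_of_ne (show (1:Fin 4) ≠ 3 by decide),
      ← hP, ← hQ, hv2, hv3]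
    rw [← hQ] at hs
    linear_combination (-X 2) * hs
  rw [Ideal.eq_top_iff_one]
  have m01 : (pderiv 0 f₁ * pderiv 1 f₂ - pderiv 1 f₁ * pderiv 0 f₂) ∈
      Ideal.span ({f₁, f₂} ∪ Set.range fun vw : Fin 4 × Fin 4 =>
        pderiv vw.1 f₁ * pderiv vw.2 f₂ - pderiv vw.2 f₁ * pderiv vw.1 f₂) :=
    Ideal.subset_span (Or.inr ⟨(0, 1), rfl⟩)
  have m23 : (pderiv 2 f₁ * pderiv 3 f₂ - pderiv 3 f₁ * pderiv 2 f₂) ∈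
      Ideal.span ({f₁, f₂} ∪ Set.range fun vw : Fin 4 × Fin 4 =>
        pderiv vw.1 f₁ * pderiv vw.2 f₂ - pderiv vw.2 f₁ * pderiv vw.1 f₂) :=
    Ideal.subset_span (Or.inr ⟨(2, 3), rfl⟩)
  have mf₂ : f₂ ∈ Ideal.span ({f₁, f₂} ∪ Set.range fun vw : Fin 4 × Fin 4 =>
        pderiv vw.1 f₁ * pderiv vw.2 f₂ - pderiv vw.2 f₁ * pderiv vw.1 f₂) :=
    Ideal.subset_span (Or.inl (Or.inr rfl))
  have key : (1 : MvPolynomial (Fin 4) ℂ)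
      = f₂ + (pderiv 0 f₁ * pderiv 1 f₂ - pderiv 1 f₁ * pderiv 0 f₂)
          - (pderiv 2 f₁ * pderiv 3 f₂ - pderiv 3 f₁ * pderiv 2 f₂) := by
    rw [h01, h23, hf₂]; ring
  rw [key]
  exact sub_mem (add_mem mf₂ m01) m23
end

section
/- With notation as in the context, let C ⊂ R be the set of images of the elements d_{k,i}·u_{k,i} (for all k ∈ {1,2,3} and 1 ≤ i ≤ p_k), i.e. the two-cycles. Then the three ℂ-subalgebras of R generated respectively by C ∪ {images of D_kU_l for all k, l ∈ {1,2,3}}, by C ∪ {images of D_1U_2, D_1U_3, D_2U_1, D_2U_3}, and by C ∪ {images of D_1U_2, D_2U_1, D_2U_3}, all coincide. -/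
open MvPolynomial

/-- The index type of the arrow variables: `Sum.inl ⟨k, i⟩` is the downward arrow
`d_{k,i+1}` and `Sum.inr ⟨k, i⟩` is the upward arrow `u_{k,i+1}` (arm `k`, `i : Fin (p k)`). -/
abbrev ReconArrows (p : Fin 3 → ℕ) : Type := (Σ k : Fin 3, Fin (p k)) ⊕ (Σ k : Fin 3, Fin (p k))

/-- The polynomial ring `P = ℂ[d_{k,i}, u_{k,i}]`. -/
abbrev ReconP (p : Fin 3 → ℕ) : Type := MvPolynomial (ReconArrows p) ℂ

/-- `D_k = d_{k,1}⋯d_{k,p_k}`. -/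
noncomputable def ReconD (p : Fin 3 → ℕ) (k : Fin 3) : ReconP p :=
  ∏ i : Fin (p k), X (Sum.inl ⟨k, i⟩)

/-- `U_k = u_{k,1}⋯u_{k,p_k}`. -/
noncomputable def ReconU (p : Fin 3 → ℕ) (k : Fin 3) : ReconP p :=
  ∏ i : Fin (p k), X (Sum.inr ⟨k, i⟩)

/-- The quotient `R = P/(D₁ - D₂ + D₃)` by the canonical relation. -/
abbrev ReconR (p : Fin 3 → ℕ) : Type :=
  ReconP p ⧸ Ideal.span {ReconD p 0 - ReconD p 1 + ReconD p 2}

/-- The quotient algebra map `π : P → R`. -/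
noncomputable def ReconPi (p : Fin 3 → ℕ) : ReconP p →ₐ[ℂ] ReconR p :=
  Ideal.Quotient.mkₐ ℂ _

/-- The set `C` of (images in `R` of) the two-cycles `d_{k,i}·u_{k,i}`. -/
noncomputable def ReconTwoCycles (p : Fin 3 → ℕ) : Set (ReconR p) :=
  Set.range fun ki : Σ k : Fin 3, Fin (p k) =>
    ReconPi p (X (Sum.inl ki) * X (Sum.inr ki))

/-- `⟨S₃⟩ = ⟨S₂⟩ = ⟨S₁⟩`: the ℂ-subalgebras of `R = P/(D₁ - D₂ + D₃)` generated by the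
two-cycles together with (1) all cycles `D_kU_l`, (2) the cycles
`D₁U₂, D₁U₃, D₂U₁, D₂U₃`, and (3) the cycles `D₁U₂, D₂U₁, D₂U₃`, all coincide.
(Here arm `k ∈ {1,2,3}` of the paper corresponds to `k ∈ Fin 3 = {0,1,2}`.) -/
theorem stmt_10 (p : Fin 3 → ℕ) (hp : ∀ k, 0 < p k) :
    Algebra.adjoin ℂ (ReconTwoCycles p ∪
        Set.range fun kl : Fin 3 × Fin 3 => ReconPi p (ReconD p kl.1 * ReconU p kl.2)) =
      Algebra.adjoin ℂ (ReconTwoCycles p ∪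
        {ReconPi p (ReconD p 0 * ReconU p 1), ReconPi p (ReconD p 0 * ReconU p 2),
         ReconPi p (ReconD p 1 * ReconU p 0), ReconPi p (ReconD p 1 * ReconU p 2)}) ∧
    Algebra.adjoin ℂ (ReconTwoCycles p ∪
        Set.range fun kl : Fin 3 × Fin 3 => ReconPi p (ReconD p kl.1 * ReconU p kl.2)) =
      Algebra.adjoin ℂ (ReconTwoCycles p ∪
        {ReconPi p (ReconD p 0 * ReconU p 1), ReconPi p (ReconD p 1 * ReconU p 0),
         ReconPi p (ReconD p 1 * ReconU p 2)}) := by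

  have hdiag : ∀ k, ReconPi p (ReconD p k * ReconU p k) ∈
      Algebra.adjoin ℂ (ReconTwoCycles p) := by
    intro k
    have h : ReconD p k * ReconU p k =
        ∏ i : Fin (p k), (X (Sum.inl ⟨k, i⟩) * X (Sum.inr ⟨k, i⟩)) := by
      rw [Finset.prod_mul_distrib]; rfl
    rw [h, map_prod]
    exact Subalgebra.prod_mem _ fun i _ => Algebra.subset_adjoin ⟨⟨k, i⟩, rfl⟩
  have hrel : ReconPi p (ReconD p 0) - ReconPi p (ReconD p 1) + ReconPi p (ReconD p 2)
      = 0 := by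
    rw [← map_sub, ← map_add]
    simp only [ReconPi, Ideal.Quotient.mkₐ_eq_mk]
    exact Ideal.Quotient.eq_zero_iff_mem.mpr (Ideal.subset_span rfl)
  have hpi : ∀ l, ReconPi p (ReconD p 1 * ReconU p l) =
      ReconPi p (ReconD p 0 * ReconU p l) + ReconPi p (ReconD p 2 * ReconU p l) := by
    intro l
    simp only [map_mul]
    linear_combination (-(ReconPi p (ReconU p l))) * hrel
  set C := ReconTwoCycles p with hC
  set S3 : Set (ReconR p) := {ReconPi p (ReconD p 0 * ReconU p 1),
    ReconPi p (ReconD p 1 * ReconU p 0), ReconPi p (ReconD p 1 * ReconU p 2)} with hS3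
  set S2 : Set (ReconR p) := {ReconPi p (ReconD p 0 * ReconU p 1),
    ReconPi p (ReconD p 0 * ReconU p 2), ReconPi p (ReconD p 1 * ReconU p 0),
    ReconPi p (ReconD p 1 * ReconU p 2)} with hS2
  set S1 : Set (ReconR p) :=
    Set.range fun kl : Fin 3 × Fin 3 => ReconPi p (ReconD p kl.1 * ReconU p kl.2) with hS1
  have hdiag3 : ∀ k, ReconPi p (ReconD p k * ReconU p k) ∈
      Algebra.adjoin ℂ (C ∪ S3) :=
    fun k => Algebra.adjoin_mono Set.subset_union_left (hdiag k)
  have g01 : ReconPi p (ReconD p 0 * ReconU p 1) ∈ Algebra.adjoin ℂ (C ∪ S3) :=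
    Algebra.subset_adjoin (Or.inr (Or.inl rfl))
  have g10 : ReconPi p (ReconD p 1 * ReconU p 0) ∈ Algebra.adjoin ℂ (C ∪ S3) :=
    Algebra.subset_adjoin (Or.inr (Or.inr (Or.inl rfl)))
  have g12 : ReconPi p (ReconD p 1 * ReconU p 2) ∈ Algebra.adjoin ℂ (C ∪ S3) :=
    Algebra.subset_adjoin (Or.inr (Or.inr (Or.inr rfl)))
  have g21 : ReconPi p (ReconD p 2 * ReconU p 1) ∈ Algebra.adjoin ℂ (C ∪ S3) := by
    have h : ReconPi p (ReconD p 2 * ReconU p 1) =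
        ReconPi p (ReconD p 1 * ReconU p 1) - ReconPi p (ReconD p 0 * ReconU p 1) := by
      linear_combination -hpi 1
    rw [h]; exact sub_mem (hdiag3 1) g01
  have g20 : ReconPi p (ReconD p 2 * ReconU p 0) ∈ Algebra.adjoin ℂ (C ∪ S3) := by
    have h : ReconPi p (ReconD p 2 * ReconU p 0) =
        ReconPi p (ReconD p 1 * ReconU p 0) - ReconPi p (ReconD p 0 * ReconU p 0) := by
      linear_combination -hpi 0
    rw [h]; exact sub_mem g10 (hdiag3 0)
  have g02 : ReconPi p (ReconD p 0 * ReconU p 2) ∈ Algebra.adjoin ℂ (C ∪ S3) := by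
    have h : ReconPi p (ReconD p 0 * ReconU p 2) =
        ReconPi p (ReconD p 1 * ReconU p 2) - ReconPi p (ReconD p 2 * ReconU p 2) := by
      linear_combination -hpi 2
    rw [h]; exact sub_mem g12 (hdiag3 2)
  have hmem : ∀ k l : Fin 3, ReconPi p (ReconD p k * ReconU p l) ∈
      Algebra.adjoin ℂ (C ∪ S3) := by
    intro k l
    fin_cases k <;> fin_cases l
    · exact hdiag3 0
    · exact g01
    · exact g02
    · exact g10
    · exact hdiag3 1
    · exact g12
    · exact g20
    · exact g21
    · exact hdiag3 2
  have h13 : Algebra.adjoin ℂ (C ∪ S1) = Algebra.adjoin ℂ (C ∪ S3) := by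
    refine le_antisymm (Algebra.adjoin_le ?_) (Algebra.adjoin_mono ?_)
    · rintro x (hx | ⟨⟨k, l⟩, rfl⟩)
      · exact Algebra.subset_adjoin (Or.inl hx)
      · exact hmem k l
    · refine Set.union_subset_union_right _ ?_
      rintro x (rfl | rfl | rfl)
      · exact ⟨(0, 1), rfl⟩
      · exact ⟨(1, 0), rfl⟩
      · exact ⟨(1, 2), rfl⟩
  have h12 : Algebra.adjoin ℂ (C ∪ S1) = Algebra.adjoin ℂ (C ∪ S2) := by
    refine le_antisymm ?_ (Algebra.adjoin_mono ?_)
    · rw [h13]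
      refine Algebra.adjoin_mono ?_
      refine Set.union_subset_union_right _ ?_
      rintro x (rfl | rfl | rfl)
      · exact Or.inl rfl
      · exact Or.inr (Or.inr (Or.inl rfl))
      · exact Or.inr (Or.inr (Or.inr rfl))
    · refine Set.union_subset_union_right _ ?_
      rintro x (rfl | rfl | rfl | rfl)
      · exact ⟨(0, 1), rfl⟩
      · exact ⟨(0, 2), rfl⟩
      · exact ⟨(1, 0), rfl⟩
      · exact ⟨(1, 2), rfl⟩
  exact ⟨h12, h13⟩
end

section
/- Let V and E be finite types, s, t : E → V functions, and m : E → ℕ. Suppose that for every function μ : V → ℂˣ into the multiplicative group of nonzero complex numbers, ∏_{e ∈ E} ((μ(s(e)))⁻¹ · μ(t(e)))^{m(e)} = 1. Then for every v ∈ V, Σ_{e : s(e) = v} m(e) = Σ_{e : t(e) = v} m(e). -/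
/-- If a monomial `∏ x_e^{m(e)}` in the arrow variables of a quiver is invariant under
the conjugation torus action, then at every vertex the number of arrows leaving equals
the number of arrows arriving (counted with multiplicity `m`). -/
theorem stmt_13 (V E : Type*) [Fintype V] [Fintype E] [DecidableEq V]
    (s t : E → V) (m : E → ℕ)
    (h : ∀ μ : V → ℂˣ, ∏ e : E, ((μ (s e))⁻¹ * μ (t e)) ^ m e = 1) :
    ∀ v : V, ∑ e ∈ Finset.univ.filter (fun e => s e = v), m e =
      ∑ e ∈ Finset.univ.filter (fun e => t e = v), m e := by
  intro v
  set u : ℂˣ := Units.mk0 2 (by norm_num) with hu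
  have key := h (fun w => if w = v then u else 1)
  have hsplit : ∀ e : E,
      (((if s e = v then u else 1))⁻¹ * (if t e = v then u else 1)) ^ m e =
      (u ^ (if s e = v then m e else 0))⁻¹ * u ^ (if t e = v then m e else 0) := by
    intro e
    by_cases h1 : s e = v <;> by_cases h2 : t e = v <;>
      simp [h1, h2, mul_pow, inv_pow]
  rw [Finset.prod_congr rfl (fun e _ => hsplit e)] at key
  rw [Finset.prod_mul_distrib, Finset.prod_inv_distrib, Finset.prod_pow_eq_pow_sum,
    Finset.prod_pow_eq_pow_sum] at key
  rw [← Finset.sum_filter, ← Finset.sum_filter] at key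
  have hyp : u ^ ∑ e ∈ Finset.univ.filter (fun e => t e = v), m e =
      u ^ ∑ e ∈ Finset.univ.filter (fun e => s e = v), m e := by
    rw [inv_mul_eq_one] at key
    exact key.symm
  have := congrArg Units.val hyp
  simp only [Units.val_pow_eq_pow_val, hu, Units.val_mk0] at this
  have h2 : ((2:ℝ):ℂ) = (2:ℂ) := by norm_num
  rw [← h2, ← Complex.ofReal_pow, ← Complex.ofReal_pow] at this
  have := Complex.ofReal_injective this
  exact (pow_right_injective₀ (by norm_num : (0:ℝ) < 2) (by norm_num) this).symm
end
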